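/- Let n, p ≥ 1 and C ≥ 1 be integers and β ∈ (0,1). Let (E_k)_{k≥0} be edge sets E_k ⊆ {1,…,n}×{1,…,n} with (i,i) ∈ E_k for all i, k, such that for every k ≥ 0 the directed graph with edge set ∪_{l=k}^{k+C−1} E_l is strongly connected. Let (B_k) be column-stochastic n×n matrices with [B_k]_{ij} > 0 ⇔ (i,j) ∈ E_k and [B_k]_{ij} ≥ β on edges. Define v_0 = (1/n) 1_n and v_{k+1} = B_k v_k (so each v_k is a stochastic vector with positive entries), and assume additionally that [v_k]_j ≥ 1/n^{nC+1} for all j and k. Define R_k = diag(v_{k+1})^{−1} B_k diag(v_k). Set τ = β/n^{nC+1} and Q_B = 2n(1+τ^{−nC})/(1−τ^{nC}), and let C̄_B ≥ C be an integer such that γ_B := Q_B (1−τ^{nC})^{(C̄_B−1)/(nC)} < 1. Then for every k ≥ C̄_B−1 and every b ∈ (ℝ^p)^n, setting a = (R_k R_{k−1} ⋯ R_{k−C̄_B+1} ⊗ I_p) b, one has ‖((I_n − 1_n v_{k+1}ᵀ) ⊗ I_p) a‖ ≤ γ_B ‖((I_n − 1_n v_{k−C̄_B+1}ᵀ) ⊗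 I_p) b‖. -/

import Mathlib

open Matrix

/-- The block ℓ₂ norm on `(ℝ^p)^n`: `‖x‖ = (∑_i ‖x^i‖₂²)^{1/2}`. -/
noncomputable def bnorm {n p : ℕ} (x : Fin n → EuclideanSpace ℝ (Fin p)) : ℝ :=
  Real.sqrt (∑ i, ‖x i‖ ^ 2)

/-- The blockwise action `(M ⊗ I_p)` of an `n×n` matrix on `(ℝ^p)^n`:
`((M ⊗ I_p)x)^i = ∑_j M_{ij} x^j`. -/
noncomputable def mapp {n p : ℕ} (M : Matrix (Fin n) (Fin n) ℝ)
    (x : Fin n → EuclideanSpace ℝ (Fin p)) : Fin n → EuclideanSpace ℝ (Fin p) :=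
  fun i => ∑ j, M i j • x j

/-- The matrix `I_n − 1_n φᵀ`. -/
noncomputable def proj {n : ℕ} (φ : Fin n → ℝ) : Matrix (Fin n) (Fin n) ℝ :=
  1 - Matrix.vecMulVec (fun _ => 1) φ

/-- The backward matrix product `A_hi ⋯ A_lo` (empty product, when `hi + 1 ≤ lo`, is `I`). -/
noncomputable def bprod {n : ℕ} (A : ℕ → Matrix (Fin n) (Fin n) ℝ) (lo hi : ℕ) :
    Matrix (Fin n) (Fin n) ℝ :=
  (((List.range (hi + 1 - lo)).map fun t => A (lo + t)).reverse).prod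

/-- A directed graph on `Fin n` with edge set `E ⊆ Fin n × Fin n` is strongly connected:
for every pair of distinct vertices `i, j` there is a directed path from `j` to `i`,
where an edge `(i, j) ∈ E` means `j ⟶ i`. -/
def StronglyConnected {n : ℕ} (E : Set (Fin n × Fin n)) : Prop :=
  ∀ i j : Fin n, i ≠ j → Relation.TransGen (fun a b => (b, a) ∈ E) j i


/-- Forward-indexed product helper: `fprodX A lo t = A (lo+t-1) * ⋯ * A lo`. -/
noncomputable def fprodX {n : ℕ} (A : ℕ → Matrix (Fin n) (Fin n) ℝ) (lo t : ℕ) :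
    Matrix (Fin n) (Fin n) ℝ :=
  (((List.range t).map fun i => A (lo + i)).reverse).prod

lemma fprodX_zero {n : ℕ} (A : ℕ → Matrix (Fin n) (Fin n) ℝ) (lo : ℕ) :
    fprodX A lo 0 = 1 := rfl

lemma fprodX_succ {n : ℕ} (A : ℕ → Matrix (Fin n) (Fin n) ℝ) (lo t : ℕ) :
    fprodX A lo (t + 1) = A (lo + t) * fprodX A lo t := by
  unfold fprodX
  rw [List.range_succ, List.map_append, List.reverse_append]
  simp

lemma fprodX_add {n : ℕ} (A : ℕ → Matrix (Fin n) (Fin n) ℝ) (lo t u : ℕ) :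
    fprodX A lo (t + u) = fprodX A (lo + t) u * fprodX A lo t := by
  induction u with
  | zero => simp [fprodX_zero]
  | succ u ih =>
      rw [show t + (u + 1) = (t + u) + 1 from rfl, fprodX_succ, ih, fprodX_succ,
        mul_assoc, add_assoc]

lemma crossingX {α : Type*} {r : α → α → Prop} {S : Finset α} {x y : α}
    (h : Relation.TransGen r x y) (hx : x ∈ S) (hy : y ∉ S) :
    ∃ a b, a ∈ S ∧ b ∉ S ∧ r a b := by
  revert hy
  induction h with
  | single h => exact fun hy => ⟨_, _, hx, hy, h⟩
  | @tail b c h1 h2 ih =>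
      intro hy
      by_cases hb : b ∈ S
      · exact ⟨_, _, hb, hy, h2⟩
      · exact ih hb

lemma contrX {n : ℕ} (hne : (Finset.univ : Finset (Fin n)).Nonempty)
    (A : Matrix (Fin n) (Fin n) ℝ) (δ : ℝ) (hδ : 0 ≤ δ)
    (hrow : ∀ i, ∑ j, A i j = 1) (hlb : ∀ i j, δ ≤ A i j) (z : Fin n → ℝ) :
    Finset.univ.sup' hne (A.mulVec z) - Finset.univ.inf' hne (A.mulVec z) ≤
      (1 - δ) * (Finset.univ.sup' hne z - Finset.univ.inf' hne z) := by
  obtain ⟨i, -, hi⟩ := Finset.exists_mem_eq_sup' hne (A.mulVec z)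
  obtain ⟨i', -, hi'⟩ := Finset.exists_mem_eq_inf' hne (A.mulVec z)
  set Mx := Finset.univ.sup' hne z with hMx
  set mn := Finset.univ.inf' hne z with hmn
  have hzM : ∀ a, z a ≤ Mx := fun a => Finset.le_sup' z (Finset.mem_univ a)
  have hzm : ∀ a, mn ≤ z a := fun a => Finset.inf'_le z (Finset.mem_univ a)
  have hMm : mn ≤ Mx := le_trans (hzm i) (hzM i)
  set μ : Fin n → ℝ := fun a => min (A i a) (A i' a) with hμ
  have hμδ : ∀ a, δ ≤ μ a := fun a => le_min (hlb i a) (hlb i' a)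
  have hs : δ ≤ ∑ a, μ a := by
    obtain ⟨a0, -⟩ := hne
    calc δ ≤ μ a0 := hμδ a0
    _ ≤ ∑ a, μ a := Finset.single_le_sum (fun a _ => le_trans hδ (hμδ a)) (Finset.mem_univ a0)
  have hAz : ∀ l, A.mulVec z l = ∑ a, A l a * z a := by
    intro l; simp [Matrix.mulVec, dotProduct]
  have h2 : ∑ a, (A i a - μ a) * z a ≤ ∑ a, (A i a - μ a) * Mx :=
    Finset.sum_le_sum fun a _ =>
      mul_le_mul_of_nonneg_left (hzM a) (by simp [hμ, sub_nonneg, min_le_left])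
  have h3 : ∑ a, (A i' a - μ a) * mn ≤ ∑ a, (A i' a - μ a) * z a :=
    Finset.sum_le_sum fun a _ =>
      mul_le_mul_of_nonneg_left (hzm a) (by simp [hμ, sub_nonneg, min_le_right])
  have e1 : ∑ a, (A i a - μ a) * z a = ∑ a, A i a * z a - ∑ a, μ a * z a := by
    rw [← Finset.sum_sub_distrib]; simp [sub_mul]
  have e1' : ∑ a, (A i' a - μ a) * z a = ∑ a, A i' a * z a - ∑ a, μ a * z a := by
    rw [← Finset.sum_sub_distrib]; simp [sub_mul]
  have e2 : ∑ a, (A i a - μ a) * Mx = (1 - ∑ a, μ a) * Mx := by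
    rw [← Finset.sum_mul, Finset.sum_sub_distrib, hrow i]
  have e2' : ∑ a, (A i' a - μ a) * mn = (1 - ∑ a, μ a) * mn := by
    rw [← Finset.sum_mul, Finset.sum_sub_distrib, hrow i']
  have key : A.mulVec z i - A.mulVec z i' ≤ (1 - ∑ a, μ a) * (Mx - mn) := by
    rw [hAz i, hAz i']
    nlinarith [h2, h3, e1, e1', e2, e2']
  have last : (1 - ∑ a, μ a) * (Mx - mn) ≤ (1 - δ) * (Mx - mn) :=
    mul_le_mul_of_nonneg_right (by linarith) (by linarith)
  rw [← hi, ← hi'] at key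
  linarith
set_option maxHeartbeats 1600000 in
/-- `C̄_B`-step contraction for the sequence `R_k = diag(v_{k+1})⁻¹ B_k diag(v_k)`
(Corollary 9 of the paper). -/
theorem stmt13 (n p C : ℕ) (hn : 1 ≤ n) (hp : 1 ≤ p) (hC : 1 ≤ C)
    (β : ℝ) (hβ : β ∈ Set.Ioo (0 : ℝ) 1)
    (E : ℕ → Set (Fin n × Fin n))
    (hself : ∀ k (i : Fin n), (i, i) ∈ E k)
    (hconn : ∀ k, StronglyConnected (⋃ l ∈ Finset.Icc k (k + C - 1), E l))
    (B : ℕ → Matrix (Fin n) (Fin n) ℝ)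
    (hBnn : ∀ k i j, 0 ≤ B k i j) (hBcol : ∀ k j, ∑ i, B k i j = 1)
    (hBcomp : ∀ k i j, 0 < B k i j ↔ (i, j) ∈ E k)
    (hBβ : ∀ k i j, (i, j) ∈ E k → β ≤ B k i j)
    (v : ℕ → Fin n → ℝ)
    (hv0 : v 0 = fun _ => 1 / (n : ℝ))
    (hvrec : ∀ k, v (k + 1) = (B k).mulVec (v k))
    (hvlb : ∀ k j, 1 / (n : ℝ) ^ (n * C + 1) ≤ v k j)
    (R : ℕ → Matrix (Fin n) (Fin n) ℝ)
    (hR : ∀ k, R k = (Matrix.diagonal (v (k + 1)))⁻¹ * B k * Matrix.diagonal (v k))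
    (τ : ℝ) (hτ : τ = β / (n : ℝ) ^ (n * C + 1))
    (QB : ℝ) (hQB : QB = 2 * n * (1 + (τ ^ (n * C))⁻¹) / (1 - τ ^ (n * C)))
    (CbB : ℕ) (hCbB : C ≤ CbB)
    (γB : ℝ)
    (hγB : γB = QB * (1 - τ ^ (n * C)) ^ (((CbB : ℝ) - 1) / ((n : ℝ) * C)))
    (hγB1 : γB < 1) :
    ∀ k, CbB - 1 ≤ k → ∀ b : Fin n → EuclideanSpace ℝ (Fin p),
      bnorm (mapp (proj (v (k + 1))) (mapp (bprod R (k + 1 - CbB) k) b)) ≤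
        γB * bnorm (mapp (proj (v (k + 1 - CbB))) b) := by
  intro k hk b
  classical
  have hne : (Finset.univ : Finset (Fin n)).Nonempty := ⟨⟨0, hn⟩, Finset.mem_univ _⟩
  have hnR : (1:ℝ) ≤ n := by exact_mod_cast hn
  have hnpos : (0:ℝ) < n := by linarith
  have hX1 : (1:ℝ) ≤ (n : ℝ) ^ (n * C + 1) := one_le_pow₀ hnR
  have hτpos : 0 < τ := by rw [hτ]; exact div_pos hβ.1 (by linarith)
  have hτle : τ ≤ β := by rw [hτ]; exact div_le_self hβ.1.le hX1
  have hτlt1 : τ < 1 := lt_of_le_of_lt hτle hβ.2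
  set δ := τ ^ (n * C) with hδdef
  have hnC1 : 1 ≤ n * C := Nat.mul_le_mul hn hC
  have hδpos : 0 < δ := pow_pos hτpos _
  have hδle : δ ≤ τ := by
    calc δ ≤ τ ^ 1 := pow_le_pow_of_le_one hτpos.le hτlt1.le hnC1
    _ = τ := pow_one τ
  have hδlt1 : δ < 1 := lt_of_le_of_lt (hδle.trans hτle) hβ.2
  -- v facts
  have hvpos : ∀ l j, 0 < v l j := fun l j =>
    lt_of_lt_of_le (by positivity) (hvlb l j)
  have hvsum : ∀ l, ∑ j, v l j = 1 := by
    intro l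
    induction l with
    | zero =>
        rw [hv0]
        simp only [Finset.sum_const, Finset.card_univ, Fintype.card_fin, nsmul_eq_mul]
        field_simp
    | succ l ih =>
        rw [hvrec l]
        simp only [Matrix.mulVec, dotProduct]
        rw [Finset.sum_comm]
        have : ∀ j, ∑ i, B l i j * v l j = v l j := by
          intro j; rw [← Finset.sum_mul, hBcol l j, one_mul]
        rw [Finset.sum_congr rfl fun j _ => this j, ih]
  have hvle1 : ∀ l j, v l j ≤ 1 := by
    intro l j
    calc v l j ≤ ∑ j', v l j' :=
          Finset.single_le_sum (fun a _ => (hvpos l a).le) (Finset.mem_univ j)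
    _ = 1 := hvsum l
  -- R entry formula
  have hRentry : ∀ l i j, R l i j = (v (l+1) i)⁻¹ * B l i j * v l j := by
    intro l i j
    have hinv : (Matrix.diagonal (v (l+1)))⁻¹
        = Matrix.diagonal (fun i => (v (l+1) i)⁻¹) := by
      apply Matrix.inv_eq_right_inv
      rw [Matrix.diagonal_mul_diagonal]
      have : (fun i => v (l+1) i * (v (l+1) i)⁻¹) = fun _ => (1:ℝ) :=
        funext fun i => mul_inv_cancel₀ (hvpos (l+1) i).ne'
      rw [this, Matrix.diagonal_one]
    rw [hR l, hinv, Matrix.mul_diagonal, Matrix.diagonal_mul]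
  have hRnn : ∀ l i j, 0 ≤ R l i j := by
    intro l i j
    rw [hRentry]
    have h1 := hvpos (l+1) i
    have h2 := hvpos l j
    have h3 := hBnn l i j
    positivity
  have hRrow : ∀ l i, ∑ j, R l i j = 1 := by
    intro l i
    have hmv : ∑ j, B l i j * v l j = v (l+1) i := by
      rw [hvrec l]; simp [Matrix.mulVec, dotProduct]
    calc ∑ j, R l i j = ∑ j, (v (l+1) i)⁻¹ * (B l i j * v l j) := by
          apply Finset.sum_congr rfl; intro j _; rw [hRentry]; ring
    _ = (v (l+1) i)⁻¹ * ∑ j, B l i j * v l j := by rw [Finset.mul_sum]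
    _ = (v (l+1) i)⁻¹ * v (l+1) i := by rw [hmv]
    _ = 1 := inv_mul_cancel₀ (hvpos (l+1) i).ne'
  have hRτ : ∀ l i j, (i, j) ∈ E l → τ ≤ R l i j := by
    intro l i j hij
    rw [hRentry, hτ]
    have h1 : (1:ℝ) ≤ (v (l+1) i)⁻¹ := by
      rw [le_inv_comm₀ one_pos (hvpos (l+1) i)]
      simpa using hvle1 (l+1) i
    have h2 : β ≤ B l i j := hBβ l i j hij
    have h3 : 1 / (n : ℝ) ^ (n * C + 1) ≤ v l j := hvlb l j
    have h4 : (0:ℝ) < (n : ℝ) ^ (n * C + 1) := by linarith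
    calc β / (n : ℝ) ^ (n * C + 1) = β * (1 / (n : ℝ) ^ (n * C + 1)) := by ring
    _ ≤ B l i j * v l j := by
        apply mul_le_mul h2 h3 (by positivity) ((hβ.1.le).trans h2)
    _ = 1 * (B l i j * v l j) := by ring
    _ ≤ (v (l+1) i)⁻¹ * (B l i j * v l j) := by
        apply mul_le_mul_of_nonneg_right h1
        have := hBnn l i j
        have := (hvpos l j).le
        positivity
    _ = (v (l+1) i)⁻¹ * B l i j * v l j := by ring
  have hvecMul : ∀ l, Matrix.vecMul (v (l+1)) (R l) = v l := by
    intro l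
    funext j
    simp only [Matrix.vecMul, dotProduct]
    have hterm : ∀ i, v (l+1) i * R l i j = B l i j * v l j := by
      intro i
      rw [hRentry, ← mul_assoc, ← mul_assoc, mul_inv_cancel₀ (hvpos (l+1) i).ne', one_mul]
    rw [Finset.sum_congr rfl fun i _ => hterm i, ← Finset.sum_mul, hBcol l j, one_mul]
  -- fprodX facts
  have hFnn : ∀ s t i j, 0 ≤ fprodX R s t i j := by
    intro s t
    induction t with
    | zero =>
        intro i j
        rw [fprodX_zero]
        by_cases h : i = j <;> simp [Matrix.one_apply, h]
    | succ t ih =>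
        intro i j
        rw [fprodX_succ, Matrix.mul_apply]
        exact Finset.sum_nonneg fun a _ => mul_nonneg (hRnn _ _ _) (ih a j)
  have hFrow : ∀ s t i, ∑ j, fprodX R s t i j = 1 := by
    intro s t
    induction t with
    | zero => intro i; rw [fprodX_zero]; simp [Matrix.one_apply]
    | succ t ih =>
        intro i
        rw [fprodX_succ]
        simp only [Matrix.mul_apply]
        rw [Finset.sum_comm]
        have : ∀ a, ∑ j, R (s+t) i a * fprodX R s t a j = R (s+t) i a := by
          intro a; rw [← Finset.mul_sum, ih a, mul_one]
        rw [Finset.sum_congr rfl fun a _ => this a, hRrow]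
  have hFvec : ∀ s t, Matrix.vecMul (v (s + t)) (fprodX R s t) = v s := by
    intro s t
    induction t with
    | zero =>
        rw [fprodX_zero, Matrix.vecMul_one, Nat.add_zero]
    | succ t ih =>
        rw [fprodX_succ, ← Matrix.vecMul_vecMul,
          show s + (t+1) = (s+t)+1 from rfl, hvecMul (s+t), ih]
  -- positivity of nC-blocks
  have hPOS : ∀ s i0 j0, δ ≤ fprodX R s (n*C) i0 j0 := by
    intro s i0 j0
    set S : ℕ → Finset (Fin n) :=
      fun t => Finset.univ.filter (fun i => τ^t ≤ fprodX R s t i j0) with hS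
    have hmemS : ∀ t i, i ∈ S t ↔ τ^t ≤ fprodX R s t i j0 := by
      intro t i; simp [hS]
    have hj0 : j0 ∈ S 0 := by
      rw [hmemS, fprodX_zero]
      simp [Matrix.one_apply]
    have hedge : ∀ t a c, a ∈ S t → (c, a) ∈ E (s + t) → c ∈ S (t+1) := by
      intro t a c ha hca
      rw [hmemS] at ha ⊢
      rw [fprodX_succ, Matrix.mul_apply]
      calc τ^(t+1) = τ * τ^t := pow_succ' τ t
      _ ≤ R (s+t) c a * fprodX R s t a j0 :=
          mul_le_mul (hRτ _ _ _ hca) ha (pow_nonneg hτpos.le t) (hRnn _ _ _)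
      _ ≤ ∑ a', R (s+t) c a' * fprodX R s t a' j0 :=
          Finset.single_le_sum
            (fun a' _ => mul_nonneg (hRnn (s+t) c a') (hFnn s t a' j0)) (Finset.mem_univ a)
    have hmono : ∀ t, S t ⊆ S (t+1) := fun t i hi => hedge t i i hi (hself (s+t) i)
    have hmonoLe : ∀ t t', t ≤ t' → S t ⊆ S t' := by
      intro t t' h
      induction h with
      | refl => exact subset_rfl
      | step h' ih => exact ih.trans (hmono _)
    have hgrow : ∀ q, S (q*C) ≠ Finset.univ → (S (q*C)).card + 1 ≤ (S (q*C + C)).card := by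
      intro q hSne
      by_contra hcon
      push_neg at hcon
      have hsub : S (q*C) ⊆ S (q*C + C) := hmonoLe _ _ (Nat.le_add_right _ _)
      have heq : S (q*C) = S (q*C + C) :=
        Finset.eq_of_subset_of_card_le hsub (by omega)
      obtain ⟨x, hxS⟩ : ∃ x, x ∈ S (q*C) := ⟨j0, hmonoLe 0 _ (Nat.zero_le _) hj0⟩
      obtain ⟨y, hyS⟩ : ∃ y, y ∉ S (q*C) := by
        by_contra hall
        push_neg at hall
        exact hSne (Finset.eq_univ_iff_forall.mpr hall)
      have hxy : y ≠ x := fun h => hyS (h ▸ hxS)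
      have hpath := hconn (s + q*C) y x hxy
      obtain ⟨a, c, haS, hcS, hac⟩ := crossingX hpath hxS hyS
      simp only [Set.mem_iUnion, exists_prop] at hac
      obtain ⟨l, hl, hedgel⟩ := hac
      rw [Finset.mem_Icc] at hl
      have hls : s ≤ l := le_trans (Nat.le_add_right _ _) hl.1
      set t := l - s with ht
      have hlst : l = s + t := by omega
      have ht1 : q*C ≤ t := by omega
      have ht2 : t + 1 ≤ q*C + C := by omega
      have haT : a ∈ S t := hmonoLe _ _ ht1 haS
      have hcT : c ∈ S (t+1) := hedge t a c haT (hlst ▸ hedgel)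
      exact hcS (heq ▸ (hmonoLe _ _ ht2 hcT))
    have hcard : ∀ q, min (q+1) n ≤ (S (q*C)).card := by
      intro q
      induction q with
      | zero =>
          have h1 : 1 ≤ (S (0*C)).card := by
            rw [Nat.zero_mul]
            exact Finset.card_pos.mpr ⟨j0, hj0⟩
          omega
      | succ q ih =>
          have hqC : (q+1)*C = q*C + C := by ring
          by_cases hU : S (q*C) = Finset.univ
          · have hsub : S (q*C) ⊆ S ((q+1)*C) :=
              hmonoLe _ _ (by nlinarith)
            have huniv : Finset.univ ⊆ S ((q+1)*C) := hU ▸ hsub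
            have hcardn : n ≤ (S ((q+1)*C)).card := by
              have := Finset.card_le_card huniv
              simpa using this
            omega
          · have hg := hgrow q hU
            rw [hqC]
            have hminn : min (q+1+1) n ≤ min (q+1) n + 1 := by omega
            omega
    have hfin : S (n*C) = Finset.univ := by
      have h1 := hcard n
      have h2 : (S (n*C)).card ≤ n := by
        have := Finset.card_le_univ (S (n*C))
        simpa using this
      have hmin : min (n+1) n = n := min_eq_right (by omega)
      apply Finset.eq_univ_of_card
      simp only [Fintype.card_fin]
      omega
    have hi0 : i0 ∈ S (n*C) := hfin ▸ Finset.mem_univ i0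
    rw [hmemS] at hi0
    exact hi0
  -- setup of lo, m, r
  have hkC : CbB ≤ k + 1 := by omega
  set lo := k + 1 - CbB with hlo
  have hlok : lo + CbB = k + 1 := by omega
  set m := CbB / (n*C) with hm
  set r := CbB % (n*C) with hr
  have hnCpos : 0 < n*C := hnC1
  have hdecomp : r + (n*C)*m = CbB := by
    simp only [hm, hr]
    have := Nat.div_add_mod CbB (n*C)
    omega
  set M := fprodX R lo CbB with hM
  have hMsplit : M = fprodX R (lo + r) ((n*C)*m) * fprodX R lo r := by
    rw [hM, ← hdecomp, fprodX_add]
  -- block contraction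
  have hBlock : ∀ q s (z : Fin n → ℝ),
      Finset.univ.sup' hne ((fprodX R s ((n*C)*q)).mulVec z)
        - Finset.univ.inf' hne ((fprodX R s ((n*C)*q)).mulVec z)
      ≤ (1-δ)^q * (Finset.univ.sup' hne z - Finset.univ.inf' hne z) := by
    intro q
    induction q with
    | zero =>
        intro s z
        rw [Nat.mul_zero, fprodX_zero, Matrix.one_mulVec]
        simp
    | succ q ih =>
        intro s z
        have hsplit : (n*C)*(q+1) = (n*C)*q + (n*C) := by ring
        rw [hsplit, fprodX_add, ← Matrix.mulVec_mulVec]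
        have h1 := contrX hne (fprodX R (s + (n*C)*q) (n*C)) δ hδpos.le
          (hFrow _ _) (fun i j => hPOS _ i j) ((fprodX R s ((n*C)*q)).mulVec z)
        have h2 := ih s z
        calc Finset.univ.sup' hne ((fprodX R (s + (n*C)*q) (n*C)).mulVec
              ((fprodX R s ((n*C)*q)).mulVec z))
            - Finset.univ.inf' hne ((fprodX R (s + (n*C)*q) (n*C)).mulVec
              ((fprodX R s ((n*C)*q)).mulVec z))
            ≤ (1-δ) * (Finset.univ.sup' hne ((fprodX R s ((n*C)*q)).mulVec z)
              - Finset.univ.inf' hne ((fprodX R s ((n*C)*q)).mulVec z)) := h1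
        _ ≤ (1-δ) * ((1-δ)^q * (Finset.univ.sup' hne z - Finset.univ.inf' hne z)) :=
            mul_le_mul_of_nonneg_left h2 (by linarith)
        _ = (1-δ)^(q+1) * (Finset.univ.sup' hne z - Finset.univ.inf' hne z) := by ring
  -- base bound on leftover columns
  have hbase : ∀ a : Fin n,
      Finset.univ.sup' hne (fun i => fprodX R lo r i a)
        - Finset.univ.inf' hne (fun i => fprodX R lo r i a) ≤ 1 := by
    intro a
    have h1 : Finset.univ.sup' hne (fun i => fprodX R lo r i a) ≤ 1 := by
      apply Finset.sup'_le
      intro i _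
      calc fprodX R lo r i a ≤ ∑ j, fprodX R lo r i j :=
            Finset.single_le_sum (fun j _ => hFnn lo r i j) (Finset.mem_univ a)
      _ = 1 := hFrow lo r i
    have h2 : 0 ≤ Finset.univ.inf' hne (fun i => fprodX R lo r i a) :=
      Finset.le_inf' hne _ fun i _ => hFnn lo r i a
    linarith
  set D := (1-δ)^m with hD
  have hDnn : (0:ℝ) ≤ D := pow_nonneg (by linarith) m
  -- column deviation bound
  have hva : ∀ a, v lo a = ∑ l, v (k+1) l * M l a := by
    intro a
    have h := hFvec lo CbB
    rw [hlok] at h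
    have := congrFun h a
    rw [← this]
    simp [Matrix.vecMul, dotProduct]
    rfl
  have hcol : ∀ a i, |M i a - v lo a| ≤ D := by
    intro a i
    have hcolM : (fun i => M i a)
        = (fprodX R (lo + r) ((n*C)*m)).mulVec (fun l => fprodX R lo r l a) := by
      funext i'
      rw [hMsplit]
      simp [Matrix.mul_apply, Matrix.mulVec, dotProduct]
    have hspr : Finset.univ.sup' hne (fun i => M i a)
        - Finset.univ.inf' hne (fun i => M i a) ≤ D := by
      rw [hcolM]
      calc Finset.univ.sup' hne ((fprodX R (lo + r) ((n*C)*m)).mulVec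
            (fun l => fprodX R lo r l a))
          - Finset.univ.inf' hne ((fprodX R (lo + r) ((n*C)*m)).mulVec
            (fun l => fprodX R lo r l a))
          ≤ (1-δ)^m * (Finset.univ.sup' hne (fun l => fprodX R lo r l a)
            - Finset.univ.inf' hne (fun l => fprodX R lo r l a)) := hBlock m (lo+r) _
      _ ≤ (1-δ)^m * 1 := mul_le_mul_of_nonneg_left (hbase a) (pow_nonneg (by linarith) m)
      _ = D := by rw [mul_one]
    have hub : v lo a ≤ Finset.univ.sup' hne (fun i => M i a) := by
      rw [hva a]
      calc ∑ l, v (k+1) l * M l a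
          ≤ ∑ l, v (k+1) l * Finset.univ.sup' hne (fun i => M i a) :=
            Finset.sum_le_sum fun l _ =>
              mul_le_mul_of_nonneg_left (Finset.le_sup' (f := fun i => M i a) (Finset.mem_univ l))
                (hvpos (k+1) l).le
      _ = Finset.univ.sup' hne (fun i => M i a) := by
          rw [← Finset.sum_mul, hvsum (k+1), one_mul]
    have hlb2 : Finset.univ.inf' hne (fun i => M i a) ≤ v lo a := by
      rw [hva a]
      calc Finset.univ.inf' hne (fun i => M i a)
          = ∑ l, v (k+1) l * Finset.univ.inf' hne (fun i => M i a) := by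
            rw [← Finset.sum_mul, hvsum (k+1), one_mul]
      _ ≤ ∑ l, v (k+1) l * M l a :=
            Finset.sum_le_sum fun l _ =>
              mul_le_mul_of_nonneg_left (Finset.inf'_le (f := fun i => M i a) (Finset.mem_univ l))
                (hvpos (k+1) l).le
    have hiu : M i a ≤ Finset.univ.sup' hne (fun i => M i a) :=
      Finset.le_sup' (f := fun i => M i a) (Finset.mem_univ i)
    have hil : Finset.univ.inf' hne (fun i => M i a) ≤ M i a :=
      Finset.inf'_le (f := fun i => M i a) (Finset.mem_univ i)
    rw [abs_le]
    constructor <;> linarith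
  -- numeric bound : n * D ≤ γB
  have hnD : (n:ℝ) * D ≤ γB := by
    have hCR : (1:ℝ) ≤ C := by exact_mod_cast hC
    have hnCR : (0:ℝ) < (n:ℝ) * C := by nlinarith
    have hCbBlt : CbB < (n*C)*(m+1) := by
      have h1 : r < n*C := by rw [hr]; exact Nat.mod_lt _ hnCpos
      have h2 : (n*C)*(m+1) = (n*C)*m + (n*C) := by ring
      omega
    have hmge : ((CbB:ℝ) - 1) / ((n:ℝ)*C) - 1 ≤ (m:ℝ) := by
      rw [sub_le_iff_le_add, div_le_iff₀ hnCR]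
      have h2 : (CbB:ℝ) < ((n:ℝ)*C)*((m:ℝ)+1) := by
        exact_mod_cast hCbBlt
      nlinarith
    set e := ((CbB:ℝ) - 1) / ((n:ℝ)*C) with he
    have hrpow : ((1-δ)^m : ℝ) ≤ (1-δ) ^ (e - 1) := by
      rw [← Real.rpow_natCast (1-δ) m]
      exact Real.rpow_le_rpow_of_exponent_ge (by linarith) (by linarith) hmge
    have hsplit2 : (1-δ) ^ (e - 1) = (1-δ) ^ e / (1-δ) := by
      rw [Real.rpow_sub (by linarith), Real.rpow_one]
    have hepos : (0:ℝ) < (1-δ) ^ e := Real.rpow_pos_of_pos (by linarith) _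
    rw [hγB, hQB]
    calc (n:ℝ) * D ≤ (n:ℝ) * ((1-δ) ^ e / (1-δ)) := by
          apply mul_le_mul_of_nonneg_left _ (by linarith)
          rw [← hsplit2]
          exact hrpow
    _ = (n:ℝ) * (1-δ) ^ e / (1-δ) := by ring
    _ ≤ (2 * n * (1 + δ⁻¹)) * (1-δ) ^ e / (1-δ) := by
        apply div_le_div_of_nonneg_right _ (by linarith)
        have hinv : (0:ℝ) < δ⁻¹ := inv_pos.mpr hδpos
        have hkey : (0:ℝ) ≤ (2 * n * (1 + δ⁻¹) - n) * (1-δ) ^ e :=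
          mul_nonneg (by nlinarith) hepos.le
        nlinarith [hkey]
    _ = 2 * ↑n * (1 + δ⁻¹) / (1 - δ) * (1 - δ) ^ e := by ring
  have hγBpos : (0:ℝ) < γB := by
    have hinv : (0:ℝ) < δ⁻¹ := inv_pos.mpr hδpos
    rw [hγB, hQB]
    have h1 : (0:ℝ) < 2 * n * (1 + δ⁻¹) / (1 - δ) := by
      apply div_pos (by nlinarith) (by linarith)
    exact mul_pos h1 (Real.rpow_pos_of_pos (by linarith) _)
  -- rewrite bprod as M
  have hbk : bprod R lo k = M := by
    have h1 : k + 1 - lo = CbB := by omega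
    have h2 : bprod R lo k = fprodX R lo (k + 1 - lo) := rfl
    rw [h2, h1]
  rw [hbk]
  -- coordinatewise computations
  have happly : ∀ (φ : Fin n → ℝ) (x : Fin n → EuclideanSpace ℝ (Fin p)) (i : Fin n)
      (c : Fin p), (mapp (proj φ) x) i c = x i c - ∑ l, φ l * x l c := by
    intro φ x i c
    show (∑ j, proj φ i j • x j) c = _
    rw [WithLp.ofLp_sum, Finset.sum_apply]
    have hsm : ∀ j, (proj φ i j • x j) c = proj φ i j * x j c := fun j => rfl
    have hprojE : ∀ j, proj φ i j = (if i = j then (1:ℝ) else 0) - φ j := by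
      intro j
      simp [proj, Matrix.one_apply, Matrix.vecMulVec_apply, Matrix.sub_apply]
    calc ∑ j, (proj φ i j • x j) c = ∑ j, ((if i = j then (1:ℝ) else 0) - φ j) * x j c := by
          apply Finset.sum_congr rfl
          intro j _
          rw [hsm j, hprojE j]
    _ = ∑ j, ((if i = j then (1:ℝ) else 0) * x j c) - ∑ j, φ j * x j c := by
          rw [← Finset.sum_sub_distrib]
          apply Finset.sum_congr rfl
          intro j _
          ring
    _ = x i c - ∑ l, φ l * x l c := by
          congr 1
          simp [Finset.sum_ite_eq, ite_mul]
  have hmappM : ∀ (i : Fin n) (c : Fin p), (mapp M b) i c = ∑ a, M i a * b a c := by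
    intro i c
    show (∑ j, M i j • b j) c = _
    rw [WithLp.ofLp_sum, Finset.sum_apply]
    rfl
  have hLc : ∀ (c : Fin p) (i : Fin n),
      (mapp (proj (v (k+1))) (mapp M b)) i c = ∑ a, (M i a - v lo a) * b a c := by
    intro c i
    rw [happly]
    have hswap : ∑ l, v (k+1) l * (mapp M b) l c = ∑ a, v lo a * b a c := by
      calc ∑ l, v (k+1) l * (mapp M b) l c
          = ∑ l, ∑ a, v (k+1) l * (M l a * b a c) := by
            apply Finset.sum_congr rfl
            intro l _
            rw [hmappM, Finset.mul_sum]
      _ = ∑ a, ∑ l, v (k+1) l * (M l a * b a c) := Finset.sum_comm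
      _ = ∑ a, (∑ l, v (k+1) l * M l a) * b a c := by
            apply Finset.sum_congr rfl
            intro a _
            rw [Finset.sum_mul]
            apply Finset.sum_congr rfl
            intro l _
            ring
      _ = ∑ a, v lo a * b a c := by
            apply Finset.sum_congr rfl
            intro a _
            rw [← hva a]
    rw [hswap, hmappM, ← Finset.sum_sub_distrib]
    apply Finset.sum_congr rfl
    intro a _
    ring
  have hRc : ∀ (c : Fin p) (i : Fin n),
      (mapp (proj (v lo)) b) i c = b i c - ∑ l, v lo l * b l c :=
    fun c i => happly (v lo) b i c
  have hMrow : ∀ i, ∑ a, M i a = 1 := fun i => hFrow lo CbB i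
  have hcenter : ∀ (c : Fin p) (i : Fin n),
      ∑ a, (M i a - v lo a) * b a c
        = ∑ a, (M i a - v lo a) * (mapp (proj (v lo)) b) a c := by
    intro c i
    have hz : ∑ a, (M i a - v lo a) * (∑ l, v lo l * b l c) = 0 := by
      rw [← Finset.sum_mul, Finset.sum_sub_distrib, hMrow i, hvsum lo]
      ring
    calc ∑ a, (M i a - v lo a) * b a c
        = ∑ a, ((M i a - v lo a) * (b a c - ∑ l, v lo l * b l c)
            + (M i a - v lo a) * (∑ l, v lo l * b l c)) := by
          apply Finset.sum_congr rfl
          intro a _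
          ring
    _ = (∑ a, (M i a - v lo a) * (b a c - ∑ l, v lo l * b l c)) + ∑ a, (M i a - v lo a) * (∑ l, v lo l * b l c) := Finset.sum_add_distrib
    _ = ∑ a, (M i a - v lo a) * (b a c - ∑ l, v lo l * b l c) := by rw [hz, add_zero]
    _ = ∑ a, (M i a - v lo a) * (mapp (proj (v lo)) b) a c := by
          apply Finset.sum_congr rfl
          intro a _
          rw [hRc c a]
  -- per-coordinate square bound
  have hsq : ∀ c : Fin p,
      ∑ i, ((mapp (proj (v (k+1))) (mapp M b)) i c)^2
        ≤ γB^2 * ∑ i, ((mapp (proj (v lo)) b) i c)^2 := by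
    intro c
    set w : Fin n → ℝ := fun a => (mapp (proj (v lo)) b) a c with hw
    have habs : ∀ i, |(mapp (proj (v (k+1))) (mapp M b)) i c| ≤ D * ∑ a, |w a| := by
      intro i
      rw [hLc c i, hcenter c i]
      calc |∑ a, (M i a - v lo a) * w a| ≤ ∑ a, |(M i a - v lo a) * w a| :=
            Finset.abs_sum_le_sum_abs _ _
      _ ≤ ∑ a, D * |w a| := by
            apply Finset.sum_le_sum
            intro a _
            rw [abs_mul]
            exact mul_le_mul_of_nonneg_right (hcol a i) (abs_nonneg _)
      _ = D * ∑ a, |w a| := by rw [Finset.mul_sum]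
    have hCS : (∑ a, |w a|)^2 ≤ (n:ℝ) * ∑ a, (w a)^2 := by
      have h := Finset.sum_mul_sq_le_sq_mul_sq Finset.univ (fun _ => (1:ℝ)) (fun a => |w a|)
      simp only [one_pow, one_mul, Finset.sum_const, Finset.card_univ,
        Fintype.card_fin, nsmul_eq_mul, sq_abs] at h
      simpa using h
    have hterm : ∀ i, ((mapp (proj (v (k+1))) (mapp M b)) i c)^2
        ≤ D^2 * (∑ a, |w a|)^2 := by
      intro i
      rw [← sq_abs, ← mul_pow]
      apply pow_le_pow_left₀ (abs_nonneg _) (habs i) 2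
    calc ∑ i, ((mapp (proj (v (k+1))) (mapp M b)) i c)^2
        ≤ ∑ _i : Fin n, D^2 * (∑ a, |w a|)^2 := Finset.sum_le_sum fun i _ => hterm i
    _ = (n:ℝ) * (D^2 * (∑ a, |w a|)^2) := by
        simp [Finset.sum_const, Finset.card_univ, nsmul_eq_mul]
    _ ≤ (n:ℝ) * (D^2 * ((n:ℝ) * ∑ a, (w a)^2)) := by
        apply mul_le_mul_of_nonneg_left _ (by positivity)
        exact mul_le_mul_of_nonneg_left hCS (by positivity)
    _ = ((n:ℝ) * D)^2 * ∑ a, (w a)^2 := by ring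
    _ ≤ γB^2 * ∑ a, (w a)^2 := by
        apply mul_le_mul_of_nonneg_right _ (Finset.sum_nonneg fun a _ => sq_nonneg _)
        apply pow_le_pow_left₀ (by positivity) hnD 2
  -- assemble
  have hnormsq : ∀ (x : Fin n → EuclideanSpace ℝ (Fin p)),
      bnorm x = Real.sqrt (∑ i, ∑ c, (x i c)^2) := by
    intro x
    unfold bnorm
    congr 1
    apply Finset.sum_congr rfl
    intro i _
    rw [EuclideanSpace.norm_eq, Real.sq_sqrt (Finset.sum_nonneg fun c _ => sq_nonneg _)]
    simp [Real.norm_eq_abs, sq_abs]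
  rw [hnormsq, hnormsq]
  have hsum : ∑ c : Fin p, ∑ i, ((mapp (proj (v (k+1))) (mapp M b)) i c)^2
      ≤ γB^2 * ∑ c : Fin p, ∑ i, ((mapp (proj (v lo)) b) i c)^2 := by
    rw [Finset.mul_sum]
    exact Finset.sum_le_sum fun c _ => hsq c
  have key : ∑ i, ∑ c : Fin p, ((mapp (proj (v (k+1))) (mapp M b)) i c)^2
      ≤ γB^2 * ∑ i, ∑ c : Fin p, ((mapp (proj (v lo)) b) i c)^2 := by
    calc ∑ i, ∑ c : Fin p, ((mapp (proj (v (k+1))) (mapp M b)) i c)^2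
        = ∑ c : Fin p, ∑ i, ((mapp (proj (v (k+1))) (mapp M b)) i c)^2 :=
          Finset.sum_comm
    _ ≤ γB^2 * ∑ c : Fin p, ∑ i, ((mapp (proj (v lo)) b) i c)^2 := hsum
    _ = γB^2 * ∑ i, ∑ c : Fin p, ((mapp (proj (v lo)) b) i c)^2 := by
          rw [Finset.sum_comm]
  calc Real.sqrt (∑ i, ∑ c : Fin p, ((mapp (proj (v (k+1))) (mapp M b)) i c)^2)
      ≤ Real.sqrt (γB^2 * ∑ i, ∑ c : Fin p, ((mapp (proj (v lo)) b) i c)^2) :=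
        Real.sqrt_le_sqrt key
  _ = γB * Real.sqrt (∑ i, ∑ c : Fin p, ((mapp (proj (v lo)) b) i c)^2) := by
        rw [Real.sqrt_mul (sq_nonneg _), Real.sqrt_sq hγBpos.le]
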